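/- arXiv:2011.03648 — 2 statements merged into one kernel-verified Lean document; each statement's English description precedes it below -/
import Mathlib

section
/- Let λ > 0, let q, q_d : ℝ → Quaternion ℝ be differentiable unit-quaternion trajectories, with q satisfying q'(t) = (1/2) · q(t) * ⟦ω(t)⟧, and suppose q°(t) ≠ 0 so that T(q(t)) = q°(t)·I + [q⃗(t)]× is invertible. Define q̃(t) = q⃗(t) − q⃗_d(t), and suppose the sliding condition s' = 0 holds, i.e. ω(t) = 2·T(q(t))⁻¹·(q⃗_d)'(t) − λ·q̃(t). Then q̃'(t) = −(λ/2)·T(q(t))·q̃(t). -/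
noncomputable section

open Matrix

/-- The vector (imaginary) part of a quaternion. -/
def vecPart (p : Quaternion ℝ) : Fin 3 → ℝ := ![p.imI, p.imJ, p.imK]

/-- The pure-imaginary quaternion `⟦v⟧` with vector part `v`. -/
def quatOfVec (v : Fin 3 → ℝ) : Quaternion ℝ := ⟨0, v 0, v 1, v 2⟩

/-- The skew-symmetric matrix `[u]×` with `[u]× w = u × w`. -/
def skewMat (u : Fin 3 → ℝ) : Matrix (Fin 3) (Fin 3) ℝ :=
  !![0, -u 2, u 1; u 2, 0, -u 0; -u 1, u 0, 0]

/-- `T(q) = q° I + [q⃗]×`. -/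
def Tmat (p : Quaternion ℝ) : Matrix (Fin 3) (Fin 3) ℝ :=
  p.re • (1 : Matrix (Fin 3) (Fin 3) ℝ) + skewMat (vecPart p)

lemma vecPart_mul (p : Quaternion ℝ) (v : Fin 3 → ℝ) :
    vecPart (p * quatOfVec v) = Tmat p *ᵥ v := by
  funext i
  fin_cases i <;>
    simp [vecPart, quatOfVec, Tmat, skewMat, ↓Quaternion.imI_mul, ↓Quaternion.imJ_mul,
      ↓Quaternion.imK_mul, mulVec, dotProduct, Fin.sum_univ_three, Matrix.one_apply] <;> ring

lemma det_Tmat (p : Quaternion ℝ) :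
    (Tmat p).det = p.re * (p.re^2 + p.imI^2 + p.imJ^2 + p.imK^2) := by
  simp [Tmat, skewMat, vecPart, det_fin_three, Matrix.one_apply]
  ring

def imICLM : Quaternion ℝ →L[ℝ] ℝ := ⟨QuaternionAlgebra.imIₗ _ _ _, Quaternion.continuous_imI⟩
def imJCLM : Quaternion ℝ →L[ℝ] ℝ := ⟨QuaternionAlgebra.imJₗ _ _ _, Quaternion.continuous_imJ⟩
def imKCLM : Quaternion ℝ →L[ℝ] ℝ := ⟨QuaternionAlgebra.imKₗ _ _ _, Quaternion.continuous_imK⟩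

lemma hasDerivAt_vecPart {f : ℝ → Quaternion ℝ} {f' : Quaternion ℝ} {t : ℝ}
    (hf : HasDerivAt f f' t) :
    HasDerivAt (fun τ => vecPart (f τ)) (vecPart f') t := by
  rw [hasDerivAt_pi]
  intro i
  fin_cases i
  · exact (imICLM.hasFDerivAt.comp_hasDerivAt t hf)
  · exact (imJCLM.hasFDerivAt.comp_hasDerivAt t hf)
  · exact (imKCLM.hasFDerivAt.comp_hasDerivAt t hf)

theorem euclidean_difference_sliding_error_dynamics
    (lam : ℝ) (hlam : 0 < lam)
    (q qd : ℝ → Quaternion ℝ) (ω : ℝ → Fin 3 → ℝ)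
    (hq : Differentiable ℝ q) (hqd : Differentiable ℝ qd)
    (hunit : ∀ t : ℝ, ‖q t‖ = 1) (hunitd : ∀ t : ℝ, ‖qd t‖ = 1)
    (hkin : ∀ t : ℝ, deriv q t = (1 / 2 : ℝ) • (q t * quatOfVec (ω t)))
    (hre : ∀ t : ℝ, (q t).re ≠ 0)
    (hslide : ∀ t : ℝ, ω t =
      (2 : ℝ) • ((Tmat (q t))⁻¹ *ᵥ deriv (fun τ => vecPart (qd τ)) t) -
        lam • (vecPart (q t) - vecPart (qd t))) :
    ∀ t : ℝ, HasDerivAt (fun τ => vecPart (q τ) - vecPart (qd τ))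
      ((-(lam / 2)) • (Tmat (q t) *ᵥ (vecPart (q t) - vecPart (qd t)))) t := by
  intro t
  have hdq : HasDerivAt q ((1 / 2 : ℝ) • (q t * quatOfVec (ω t))) t := by
    have h := (hq t).hasDerivAt
    rwa [hkin t] at h
  have h2 : HasDerivAt (fun τ => vecPart (q τ)) ((1/2 : ℝ) • (Tmat (q t) *ᵥ ω t)) t := by
    have h := hasDerivAt_vecPart hdq
    convert h using 1
    rw [← vecPart_mul]
    funext i
    fin_cases i <;> simp [vecPart]
  have hD0 := hasDerivAt_vecPart (hqd t).hasDerivAt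
  have hD : HasDerivAt (fun τ => vecPart (qd τ)) (deriv (fun τ => vecPart (qd τ)) t) t :=
    hD0.deriv ▸ hD0
  set D := deriv (fun τ => vecPart (qd τ)) t with hDdef
  set e := vecPart (q t) - vecPart (qd t) with hedef
  have hsub := h2.sub hD
  convert hsub using 1
  case e'_4 | e'_5 | e'_6 | e'_8 => rfl
  have hnsq : (q t).re^2 + (q t).imI^2 + (q t).imJ^2 + (q t).imK^2 = 1 := by
    have h1 : Quaternion.normSq (q t) = 1 := by
      rw [Quaternion.normSq_eq_norm_mul_self, hunit t]; norm_num
    rw [Quaternion.normSq_def'] at h1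
    linarith [h1]
  have hTinv : Tmat (q t) * (Tmat (q t))⁻¹ = 1 := by
    apply Matrix.mul_nonsing_inv
    rw [det_Tmat, hnsq, mul_one]
    exact isUnit_iff_ne_zero.mpr (hre t)
  have hkey : Tmat (q t) *ᵥ ω t = (2:ℝ) • D - lam • (Tmat (q t) *ᵥ e) := by
    rw [hslide t, Matrix.mulVec_sub, Matrix.mulVec_smul, Matrix.mulVec_smul,
      Matrix.mulVec_mulVec, hTinv, Matrix.one_mulVec]
  rw [hkey]
  module
end
end

section
/- (Theorem 1, closed-loop identity.) Let J be a symmetric positive-definite 3×3 real matrix, λ > 0, K = (k₁,k₂,k₃) with kᵢ > 0, and let ω, ω_d, f, d : ℝ → ℝ³ with ω, ω_d differentiable. Let q_e : ℝ → Quaternion ℝ be differentiable with ‖q_e(t)‖ = 1 and q_e'(t) = (1/2) · q_e(t) * ⟦ω(t) − ω_d(t)⟧. Define the sliding variable s(t) = ω(t) − ω_d(t) + λ · sgn₊(q_e°(t)) · q⃗_e(t). Fix t with q_e°(t) ≠ 0, and suppose the rigid-body dynamics J ω'(t) = −ω(t) × (J ω(t)) + f(t) + M_b(t) + d(t) hold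 with the feedback-plus-feedforward control law M_b(t) = J ω_d'(t) + ω(t) × (J ω(t)) − f(t) − λ · sgn₊(q_e°(t)) · J · (q⃗_e)'(t) − K∘s(t). Then s is differentiable at t with J s'(t) = d(t) − K∘s(t), and consequently d/dt (s(t)ᵀ J s(t)) = −2 Σᵢ (kᵢ sᵢ(t)² − sᵢ(t) dᵢ(t)). -/
noncomputable section

open Matrix

/-- `sgn₊ x = 1` if `x ≥ 0` and `-1` if `x < 0`. -/
def sgnPlus (x : ℝ) : ℝ := if 0 ≤ x then 1 else -1

/-- Componentwise product `K∘v = (k₁v₁, k₂v₂, k₃v₃)`. -/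
def compMul (K v : Fin 3 → ℝ) : Fin 3 → ℝ := fun i => K i * v i

/-- `vecPart` as a linear map. -/
def vecPartL : Quaternion ℝ →ₗ[ℝ] (Fin 3 → ℝ) where
  toFun := vecPart
  map_add' p q := by funext i; fin_cases i <;> simp [vecPart]
  map_smul' c p := by funext i; fin_cases i <;> simp [vecPart]

/-- `vecPart` as a continuous linear map. -/
def vecPartCLM : Quaternion ℝ →L[ℝ] (Fin 3 → ℝ) := vecPartL.toContinuousLinearMap

theorem nonlinear_PD_closed_loop_identity
    (J : Matrix (Fin 3) (Fin 3) ℝ) (hJsymm : J.IsSymm) (hJpos : J.PosDef)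
    (lam : ℝ) (hlam : 0 < lam)
    (K : Fin 3 → ℝ) (hK : ∀ i, 0 < K i)
    (ω ωd f d : ℝ → Fin 3 → ℝ)
    (hω : Differentiable ℝ ω) (hωd : Differentiable ℝ ωd)
    (qe : ℝ → Quaternion ℝ) (hqe : Differentiable ℝ qe)
    (hunit : ∀ τ : ℝ, ‖qe τ‖ = 1)
    (hkin : ∀ τ : ℝ, deriv qe τ = (1 / 2 : ℝ) • (qe τ * quatOfVec (ω τ - ωd τ)))
    (s : ℝ → Fin 3 → ℝ)
    (hs : ∀ τ : ℝ, s τ = ω τ - ωd τ + (lam * sgnPlus (qe τ).re) • vecPart (qe τ))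
    (t : ℝ) (hre : (qe t).re ≠ 0)
    (Mb : Fin 3 → ℝ)
    (hMb : Mb = J *ᵥ deriv ωd t + ω t ⨯₃ (J *ᵥ ω t) - f t -
      (lam * sgnPlus (qe t).re) • (J *ᵥ deriv (fun τ => vecPart (qe τ)) t) -
      compMul K (s t))
    (hdynamics : J *ᵥ deriv ω t = -(ω t ⨯₃ (J *ᵥ ω t)) + f t + Mb + d t) :
    (∃ v : Fin 3 → ℝ, HasDerivAt s v t ∧ J *ᵥ v = d t - compMul K (s t)) ∧
      HasDerivAt (fun τ => s τ ⬝ᵥ (J *ᵥ s τ))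
        (-2 * ∑ i, (K i * (s t i) ^ 2 - s t i * d t i)) t := by
  -- derivative of the vector part of qe
  have hqv : HasDerivAt (fun τ => vecPart (qe τ))
      (deriv (fun τ => vecPart (qe τ)) t) t := by
    have hdiff : DifferentiableAt ℝ (fun τ => vecPart (qe τ)) t := by
      have : (fun τ => vecPart (qe τ)) = fun τ => vecPartCLM (qe τ) := rfl
      rw [this]
      exact vecPartCLM.differentiable.differentiableAt.comp t (hqe t)
    exact hdiff.hasDerivAt
  set w := deriv (fun τ => vecPart (qe τ)) t with hw
  set c := sgnPlus (qe t).re with hc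
  set v : Fin 3 → ℝ := deriv ω t - deriv ωd t + (lam * c) • w with hv
  -- sgnPlus is locally constant near t
  have hsc : ∀ᶠ τ in nhds t, sgnPlus (qe τ).re = c := by
    have hcont : Continuous fun τ => (qe τ).re :=
      Quaternion.continuous_re.comp hqe.continuous
    rcases hre.lt_or_gt with h | h
    · have := (hcont.continuousAt (x := t)).eventually (eventually_lt_nhds h)
      exact this.mono fun τ hτ => by
        simp [sgnPlus, hc, not_le.2 hτ, not_le.2 h]
    · have := (hcont.continuousAt (x := t)).eventually (eventually_gt_nhds h)
      exact this.mono fun τ hτ => by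
        simp [sgnPlus, hc, hτ.le, h.le]
  -- s has derivative v at t
  have hsd : HasDerivAt s v t := by
    have hg : HasDerivAt (fun τ => ω τ - ωd τ + (lam * c) • vecPart (qe τ)) v t :=
      (((hω t).hasDerivAt.sub (hωd t).hasDerivAt)).add (hqv.const_smul (lam * c))
    apply hg.congr_of_eventuallyEq
    exact hsc.mono fun τ hτ => by rw [hs τ, hτ]
  -- J *ᵥ v
  have hJv : J *ᵥ v = d t - compMul K (s t) := by
    rw [hv, Matrix.mulVec_add, Matrix.mulVec_sub, Matrix.mulVec_smul]
    rw [hMb] at hdynamics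
    rw [hdynamics]
    abel
  refine ⟨⟨v, hsd, hJv⟩, ?_⟩
  -- componentwise derivatives
  have hcomp : ∀ i, HasDerivAt (fun τ => s τ i) (v i) t := fun i =>
    (hasDerivAt_pi.mp hsd) i
  have key : HasDerivAt (fun τ => ∑ i, s τ i * ∑ j, J i j * s τ j)
      (∑ i, (v i * ∑ j, J i j * s t j + s t i * ∑ j, J i j * v j)) t := by
    apply HasDerivAt.fun_sum
    intro i _
    exact (hcomp i).mul (HasDerivAt.fun_sum fun j _ => (hcomp j).const_mul (J i j))
  have hfun : (fun τ => s τ ⬝ᵥ (J *ᵥ s τ)) = fun τ => ∑ i, s τ i * ∑ j, J i j * s τ j := by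
    funext τ; simp [dotProduct, Matrix.mulVec]
  have hsym : ∀ a b : Fin 3 → ℝ, a ⬝ᵥ (J *ᵥ b) = b ⬝ᵥ (J *ᵥ a) := by
    intro a b
    rw [Matrix.dotProduct_mulVec, ← Matrix.mulVec_transpose, hJsymm, dotProduct_comm]
  have hval : (∑ i, (v i * ∑ j, J i j * s t j + s t i * ∑ j, J i j * v j))
      = -2 * ∑ i, (K i * (s t i) ^ 2 - s t i * d t i) := by
    have h1 : (∑ i, (v i * ∑ j, J i j * s t j + s t i * ∑ j, J i j * v j))
        = v ⬝ᵥ (J *ᵥ s t) + s t ⬝ᵥ (J *ᵥ v) := by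
      rw [Finset.sum_add_distrib]; simp [dotProduct, Matrix.mulVec]
    rw [h1, hsym v (s t), hJv]
    simp only [dotProduct, compMul, Pi.sub_apply]
    rw [Fin.sum_univ_three, Fin.sum_univ_three]
    ring
  rw [hfun, ← hval]
  exact key
end
end
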